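/- For all a ∈ (0,π), K(2,a) = (1/(2π)) · (1/2 + cot²(a/2)·ln cos(a/2)); equivalently, K(2,a) = 1/(4π) + cos²(a/2)·ln(cos²(a/2)) / (4π sin²(a/2)). -/

import Mathlib

open MeasureTheory Real Filter
open scoped RealInnerProductSpace

noncomputable def poch (x : ℝ) (k : ℕ) : ℝ := ∏ i ∈ Finset.range k, (x + i)

noncomputable def incBeta (x α β : ℝ) : ℝ := ∫ t in (0:ℝ)..x, t ^ (α - 1) * (1 - t) ^ (β - 1)

noncomputable def sphereVol (n : ℕ) : ℝ :=
  2 * Real.pi ^ (((n : ℝ) + 1) / 2) / Real.Gamma (((n : ℝ) + 1) / 2)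

noncomputable def green (n : ℕ) (t : ℝ) : ℝ :=
  2 / (n * sphereVol n) * ∑' k : ℕ,
    poch n k / (((k : ℝ) + 1) * poch ((n : ℝ) / 2 + 1) k) *
      ((1 - t ^ 2 / 4) ^ (k + 1)
        - incBeta 1 ((n : ℝ) / 2) ((n : ℝ) / 2 + k + 1) / incBeta 1 ((n : ℝ) / 2) ((n : ℝ) / 2))

noncomputable def Kfun (n : ℕ) (a : ℝ) : ℝ :=
  2 / (n * sphereVol n) * ∑' k : ℕ,
    poch n k / (poch ((n : ℝ) / 2 + 1) k * ((k : ℝ) + 1)) *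
      (incBeta (Real.sin (a / 2) ^ 2) ((n : ℝ) / 2 + k + 1) ((n : ℝ) / 2) /
        incBeta (Real.sin (a / 2) ^ 2) ((n : ℝ) / 2) ((n : ℝ) / 2))

noncomputable def ballVol (n : ℕ) (a : ℝ) : ℝ :=
  sphereVol (n - 1) * ∫ r in (0:ℝ)..a, Real.sin r ^ (n - 1)

noncomputable def sphereMeasure (n : ℕ) :
    Measure (Metric.sphere (0 : EuclideanSpace ℝ (Fin (n + 1))) 1) :=
  (volume : Measure (EuclideanSpace ℝ (Fin (n + 1)))).toSphere


lemma sphereVol_two : sphereVol 2 = 4 * π := by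
  have hg : Real.Gamma ((2 + 1 : ℝ) / 2) = Real.sqrt π / 2 := by
    rw [show (2 + 1 : ℝ) / 2 = 1/2 + 1 by norm_num,
      Real.Gamma_add_one (by norm_num), Real.Gamma_one_half_eq]
    ring
  have hp : (π : ℝ) ^ ((2 + 1 : ℝ) / 2) = π * Real.sqrt π := by
    rw [show (2 + 1 : ℝ)/2 = 1 + 1/2 by norm_num,
      Real.rpow_add Real.pi_pos, Real.rpow_one, ← Real.sqrt_eq_rpow]
  have hs : Real.sqrt π ≠ 0 := by positivity
  unfold sphereVol
  push_cast
  rw [hp, hg]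
  field_simp
  ring

lemma incBeta_top (x : ℝ) (k : ℕ) :
    incBeta x (1 + (k : ℝ) + 1) 1 = x ^ (k + 2) / ((k : ℝ) + 2) := by
  unfold incBeta
  have h : ∀ t : ℝ, t ^ (1 + (k : ℝ) + 1 - 1) * (1 - t) ^ ((1 : ℝ) - 1) = t ^ ((k : ℝ) + 1) := by
    intro t
    rw [sub_self, Real.rpow_zero, mul_one]
    congr 1
    ring
  simp only [h]
  have hk : (0:ℝ) ≤ (k : ℝ) := Nat.cast_nonneg k
  rw [integral_rpow (Or.inl (by linarith))]
  rw [Real.zero_rpow (by linarith)]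
  rw [show (k : ℝ) + 1 + 1 = ((k + 2 : ℕ) : ℝ) by push_cast; ring, Real.rpow_natCast]
  push_cast
  ring

lemma incBeta_bot (x : ℝ) : incBeta x 1 1 = x := by
  unfold incBeta
  simp

lemma poch_pos (k : ℕ) : 0 < poch 2 k := by
  unfold poch
  exact Finset.prod_pos fun i _ => by positivity

lemma hasSum_aux {x : ℝ} (hx0 : 0 < x) (hx1 : x < 1) :
    HasSum (fun k : ℕ => x ^ (k + 1) / (((k : ℝ) + 1) * ((k : ℝ) + 2)))
      (1 + (1 - x) * Real.log (1 - x) / x) := by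
  have habs : |x| < 1 := by rw [abs_of_pos hx0]; exact hx1
  have h1 := Real.hasSum_pow_div_log_of_abs_lt_one habs
  have h2 : HasSum (fun n : ℕ => x ^ (n + 2) / ((n : ℝ) + 2)) (-Real.log (1 - x) - x) := by
    have h2' := (hasSum_nat_add_iff (f := fun n : ℕ => x ^ (n + 1) / ((n : ℝ) + 1))
        (g := -Real.log (1 - x) - x) 1).2 (by
      simp only [Finset.range_one, Finset.sum_singleton, Nat.cast_zero, pow_one]
      convert h1 using 1
      · rfl
      norm_num)
    have hfe : (fun n : ℕ => x ^ (n + 1 + 1) / ((↑(n + 1) : ℝ) + 1))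
        = fun n : ℕ => x ^ (n + 2) / ((n : ℝ) + 2) := by
      funext n; push_cast; ring_nf
    rwa [hfe] at h2'
  have h3 := h1.sub (h2.div_const x)
  convert h3 using 1
  · rfl
  · funext k
    have hk1 : ((k : ℝ) + 1) ≠ 0 := by positivity
    have hk2 : ((k : ℝ) + 2) ≠ 0 := by positivity
    rw [pow_succ (n := k + 1)]
    field_simp
    ring
  · field_simp
    ring

theorem stmt_10 (a : ℝ) (ha : a ∈ Set.Ioo 0 π) :
    Kfun 2 a = 1 / (2 * π) * (1 / 2 + Real.cot (a / 2) ^ 2 * Real.log (Real.cos (a / 2))) ∧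
    Kfun 2 a = 1 / (4 * π)
        + Real.cos (a / 2) ^ 2 * Real.log (Real.cos (a / 2) ^ 2)
          / (4 * π * Real.sin (a / 2) ^ 2) := by
  obtain ⟨ha0, haπ⟩ := ha
  have hs : 0 < Real.sin (a / 2) := Real.sin_pos_of_pos_of_lt_pi (by linarith) (by linarith [Real.pi_pos])
  have hc : 0 < Real.cos (a / 2) := Real.cos_pos_of_mem_Ioo ⟨by linarith [Real.pi_pos], by linarith⟩
  set x := Real.sin (a / 2) ^ 2 with hxdef
  have hx0 : 0 < x := by positivity
  have h1x : 1 - x = Real.cos (a / 2) ^ 2 := by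
    have := Real.sin_sq_add_cos_sq (a / 2); rw [hxdef]; linarith
  have hx1 : x < 1 := by nlinarith
  have hterm : ∀ k : ℕ,
      poch ((2 : ℕ) : ℝ) k / (poch (((2 : ℕ) : ℝ) / 2 + 1) k * ((k : ℝ) + 1)) *
        (incBeta x (((2 : ℕ) : ℝ) / 2 + (k : ℝ) + 1) (((2 : ℕ) : ℝ) / 2) /
          incBeta x (((2 : ℕ) : ℝ) / 2) (((2 : ℕ) : ℝ) / 2))
      = x ^ (k + 1) / (((k : ℝ) + 1) * ((k : ℝ) + 2)) := by
    intro k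
    have hp := (poch_pos k).ne'
    have hk1 : ((k : ℝ) + 1) ≠ 0 := by positivity
    have hk2 : ((k : ℝ) + 2) ≠ 0 := by positivity
    have e1 : ((2 : ℕ) : ℝ) / 2 = 1 := by norm_num
    have e2 : ((2 : ℕ) : ℝ) / 2 + 1 = 2 := by norm_num
    have e3 : ((2 : ℕ) : ℝ) = 2 := by norm_num
    rw [e2, e1, e3, incBeta_top, incBeta_bot, pow_succ (n := k + 1)]
    field_simp
  have hK : Kfun 2 a = 1 / (4 * π) * (1 + (1 - x) * Real.log (1 - x) / x) := by
    unfold Kfun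
    rw [tsum_congr hterm, (hasSum_aux hx0 hx1).tsum_eq, sphereVol_two]
    push_cast
    ring
  have hlog : Real.log (Real.cos (a / 2) ^ 2) = 2 * Real.log (Real.cos (a / 2)) := by
    rw [Real.log_pow]; push_cast; ring
  have hπ : (π : ℝ) ≠ 0 := Real.pi_ne_zero
  constructor
  · rw [hK, h1x, Real.cot_eq_cos_div_sin, hlog]
    rw [hxdef]
    field_simp
    ring
  · rw [hK, h1x, hlog, hxdef]
    field_simp
    try ring
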